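/- Let G be a connected graph on n vertices with principal eigenvector x normalized so that ∑_{i=1}^n x_i² = 1, let ρ be the spectral radius of the adjacency matrix of G, and for a vertex i let ρ_i be the spectral radius of the adjacency matrix of the subgraph G_(i) obtained by deleting vertex i. Then for every vertex i, x_i ≥ √((ρ - ρ_i)/(2ρ)). -/

import Mathlib

open Matrix

/-- The spectral radius of a real square matrix: the supremum of the absolute values of
its (real) eigenvalues. -/
noncomputable def specRad {V : Type*} [Fintype V] [DecidableEq V] (A : Matrix V V ℝ) : ℝ :=
  sSup {r : ℝ | ∃ μ : ℝ, Module.End.HasEigenvalue (Matrix.toLin' A) μ ∧ r = |μ|}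

/-- **Li–Wang–Van Mieghem.** Let `G` be a connected graph on `n` vertices with principal
eigenvector `x` (normalized so that `∑ x i ^ 2 = 1`) and spectral radius `ρ`, and for a vertex
`i` let `ρᵢ` be the spectral radius of the adjacency matrix of the subgraph `G_(i)` obtained by
deleting the vertex `i`. Then for every vertex `i`, `x i ≥ √((ρ - ρᵢ) / (2ρ))`. -/

lemma specRad_nonneg {V : Type*} [Fintype V] [DecidableEq V] (A : Matrix V V ℝ) :
    0 ≤ specRad A := by
  apply Real.sSup_nonneg
  rintro r ⟨μ, -, rfl⟩
  exact abs_nonneg μ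

lemma dotProduct_self_pos' {m : Type*} [Fintype m] {y : m → ℝ} (hy : y ≠ 0) :
    0 < y ⬝ᵥ y := by
  obtain ⟨j, hj⟩ : ∃ j, y j ≠ 0 := Function.ne_iff.mp hy
  rw [dotProduct]
  apply Finset.sum_pos' (fun i _ => mul_self_nonneg _)
  exact ⟨j, Finset.mem_univ j, mul_self_pos.mpr hj⟩

lemma rayleigh_le_specRad {m : Type*} [Fintype m] [DecidableEq m] {A : Matrix m m ℝ}
    (hA : A.IsHermitian) (y : m → ℝ) :
    y ⬝ᵥ (A *ᵥ y) ≤ specRad A * (y ⬝ᵥ y) := by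
  by_cases hy : y = 0
  · simp [hy]
  have hm : Nonempty m := by
    obtain ⟨j, _⟩ := Function.ne_iff.mp hy
    exact ⟨j⟩
  set T : EuclideanSpace ℝ m →ₗ[ℝ] EuclideanSpace ℝ m := A.toEuclideanLin with hT_def
  have hT : T.IsSymmetric := Matrix.isHermitian_iff_isSymmetric.mp hA
  set yE : EuclideanSpace ℝ m := (WithLp.equiv 2 (m → ℝ)).symm y with hyE_def
  have hyE : yE ≠ 0 := by simpa [hyE_def] using hy
  haveI : Nontrivial (EuclideanSpace ℝ m) := nontrivial_of_ne yE 0 hyE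
  set T' : EuclideanSpace ℝ m →L[ℝ] EuclideanSpace ℝ m := LinearMap.toContinuousLinearMap T
    with hT'_def
  have hT'app : ∀ v : EuclideanSpace ℝ m, T' v = T v := fun v => rfl
  -- any eigenvalue of toLin' A is bounded by ‖T'‖
  have hbd : ∀ ν : ℝ, Module.End.HasEigenvalue (Matrix.toLin' A) ν → |ν| ≤ ‖T'‖ := by
    intro ν hν
    obtain ⟨v, hv, hv0⟩ := hν.exists_hasEigenvector
    have hv' : Matrix.toLin' A v = ν • v := Module.End.mem_eigenspace_iff.mp hv
    set vE : EuclideanSpace ℝ m := (WithLp.equiv 2 (m → ℝ)).symm v with hvE_def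
    have hvE0 : vE ≠ 0 := by simpa [hvE_def] using hv0
    have hTv : T' vE = ν • vE := by
      rw [hT'app, hT_def]
      show Matrix.toEuclideanLin A ((WithLp.equiv 2 (m → ℝ)).symm v) = _
      rw [show Matrix.toEuclideanLin A ((WithLp.equiv 2 (m → ℝ)).symm v) = (WithLp.equiv 2 (m → ℝ)).symm (A *ᵥ v) from rfl]
      rw [show A *ᵥ v = ν • v from hv']
      rfl
    have h1 : ‖T' vE‖ ≤ ‖T'‖ * ‖vE‖ := T'.le_opNorm vE
    rw [hTv, norm_smul, Real.norm_eq_abs] at h1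
    have : (0:ℝ) < ‖vE‖ := norm_pos_iff.mpr hvE0
    exact le_of_mul_le_mul_right h1 this
  have hbdd : BddAbove {r : ℝ | ∃ μ : ℝ, Module.End.HasEigenvalue (Matrix.toLin' A) μ ∧ r = |μ|} := by
    refine ⟨‖T'‖, ?_⟩
    rintro r ⟨ν, hν, rfl⟩
    exact hbd ν hν
  -- the sup-of-rayleigh eigenvalue
  set μ : ℝ := ⨆ x : { x : EuclideanSpace ℝ m // x ≠ 0 },
      RCLike.re (inner (𝕜 := ℝ) (T x) (x : EuclideanSpace ℝ m)) / ‖(x : EuclideanSpace ℝ m)‖ ^ 2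
    with hμ_def
  have hEig : Module.End.HasEigenvalue T (μ : ℝ) := by
    have := hT.hasEigenvalue_iSup_of_finiteDimensional
    convert this using 2
    all_goals rfl
  -- transfer to toLin' A
  have hEig' : Module.End.HasEigenvalue (Matrix.toLin' A) μ := by
    obtain ⟨v, hv, hv0⟩ := hEig.exists_hasEigenvector
    have hv' : T v = μ • v := Module.End.mem_eigenspace_iff.mp hv
    apply Module.End.hasEigenvalue_of_hasEigenvector (x := (WithLp.equiv 2 (m → ℝ)) v)
    constructor
    · rw [Module.End.mem_eigenspace_iff]
      show A *ᵥ (WithLp.equiv 2 (m → ℝ)) v = _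
      have : A *ᵥ (WithLp.equiv 2 (m → ℝ)) v = (WithLp.equiv 2 (m → ℝ)) (T v) := rfl
      rw [this, hv']
      rfl
    · simpa using hv0
  have hμ_le : |μ| ≤ specRad A := le_csSup hbdd ⟨μ, hEig', rfl⟩
  -- rayleigh quotient of y is at most μ
  have hb2 : BddAbove (Set.range fun x : { x : EuclideanSpace ℝ m // x ≠ 0 } =>
      RCLike.re (inner (𝕜 := ℝ) (T x) (x : EuclideanSpace ℝ m)) / ‖(x : EuclideanSpace ℝ m)‖ ^ 2) := by
    refine ⟨‖T'‖, ?_⟩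
    rintro r ⟨⟨v, hv0⟩, rfl⟩
    have h1 : inner (𝕜 := ℝ) (T v) v ≤ ‖T v‖ * ‖v‖ := real_inner_le_norm _ _
    have h2 : ‖T v‖ ≤ ‖T'‖ * ‖v‖ := T'.le_opNorm v
    have h3 : (0:ℝ) < ‖v‖ := norm_pos_iff.mpr hv0
    simp only [RCLike.re_to_real]
    rw [div_le_iff₀ (by positivity)]
    calc inner (𝕜 := ℝ) (T v) v ≤ ‖T v‖ * ‖v‖ := h1
      _ ≤ (‖T'‖ * ‖v‖) * ‖v‖ := by nlinarith [norm_nonneg (T v)]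
      _ = ‖T'‖ * ‖v‖ ^ 2 := by ring
  have hray : RCLike.re (inner (𝕜 := ℝ) (T yE) yE) / ‖yE‖ ^ 2 ≤ μ :=
    le_ciSup hb2 ⟨yE, hyE⟩
  -- identify the rayleigh quotient with dot products
  have hinner : inner (𝕜 := ℝ) (T yE) yE = y ⬝ᵥ (A *ᵥ y) := by
    have hTy : (WithLp.equiv 2 (m → ℝ)) (T yE) = A *ᵥ y := rfl
    rw [PiLp.inner_apply]
    simp only [RCLike.inner_apply, conj_trivial]
    rw [dotProduct]
    rw [Finset.sum_congr rfl]
    intro i _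
    show y i * (A *ᵥ y) i = y i * (A *ᵥ y) i
    ring
  have hnorm : ‖yE‖ ^ 2 = y ⬝ᵥ y := by
    rw [← real_inner_self_eq_norm_sq]
    rw [PiLp.inner_apply]
    simp only [RCLike.inner_apply, conj_trivial]
    rfl
  rw [hinner, hnorm, RCLike.re_to_real] at hray
  have hyy : 0 < y ⬝ᵥ y := dotProduct_self_pos' hy
  have h5 : y ⬝ᵥ (A *ᵥ y) ≤ μ * (y ⬝ᵥ y) := (div_le_iff₀ hyy).mp hray
  have h6 : μ ≤ specRad A := (le_abs_self μ).trans hμ_le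
  nlinarith

theorem stmt4 {n : ℕ} (G : SimpleGraph (Fin n)) [DecidableRel G.Adj]
    (hG : G.Connected) (x : Fin n → ℝ) (ρ : ℝ)
    (hρ : ρ = specRad (G.adjMatrix ℝ))
    (hx_pos : ∀ i, 0 < x i)
    (hx_norm : ∑ i, x i ^ 2 = 1)
    (heig : G.adjMatrix ℝ *ᵥ x = ρ • x) :
    ∀ i, x i ≥ Real.sqrt ((ρ - specRad ((G.induce ({i}ᶜ : Set (Fin n))).adjMatrix ℝ)) / (2 * ρ)) := by
  intro i
  set A := G.adjMatrix ℝ with hA_def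
  set S : Set (Fin n) := {i}ᶜ with hS_def
  set B := (G.induce S).adjMatrix ℝ with hB_def
  set L := specRad B with hL_def
  set C : Finset (Fin n) := ({i} : Finset (Fin n))ᶜ with hC_def
  set y : S → ℝ := fun a => x ↑a with hy_def
  -- basic facts
  have hAx : ∀ a, ∑ b, A a b * x b = ρ * x a := by
    intro a
    have := congrFun heig a
    simpa [Matrix.mulVec, dotProduct] using this
  have hAsymm : ∀ a b, A a b = A b a := by
    intro a b; simp [hA_def, SimpleGraph.adjMatrix_apply, G.adj_comm]
  have hAii : A i i = 0 := by simp [hA_def]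
  have hsub : ∀ f : Fin n → ℝ, ∑ a : S, f ↑a = ∑ a ∈ C, f a := by
    intro f
    exact (Finset.sum_subtype C (by simp [hS_def, hC_def]) f).symm
  have hC : ∀ f : Fin n → ℝ, ∑ a ∈ C, f a = (∑ a, f a) - f i := by
    intro f
    have h := Finset.sum_compl_add_sum ({i} : Finset (Fin n)) f
    rw [Finset.sum_singleton] at h
    rw [hC_def]
    linarith
  have hBA : ∀ a b : S, B a b = A (↑a) ↑b := by
    intro a b
    simp [hB_def, hA_def, SimpleGraph.adjMatrix_apply, SimpleGraph.comap_adj]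
  -- the Hermitian property of B
  have hB : B.IsHermitian := by
    apply Matrix.IsHermitian.ext
    intro a b
    simp only [hB_def, SimpleGraph.adjMatrix_apply, RCLike.star_def, conj_trivial]
    exact if_congr ((G.induce S).adj_comm b a) rfl rfl
  -- dot products
  have hyy : y ⬝ᵥ y = 1 - x i ^ 2 := by
    rw [dotProduct]
    have h1 : ∑ a : S, y a * y a = ∑ a ∈ C, x a * x a := hsub (fun a => x a * x a)
    rw [h1, hC (fun a => x a * x a)]
    have : ∑ a, x a * x a = 1 := by
      rw [← hx_norm]; exact Finset.sum_congr rfl fun a _ => by ring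
    rw [this]; ring
  have hBy : y ⬝ᵥ (B *ᵥ y) = ρ - 2 * ρ * x i ^ 2 := by
    have h0 : y ⬝ᵥ (B *ᵥ y) = ∑ a : S, x ↑a * ∑ b : S, A (↑a) ↑b * x ↑b := by
      rw [dotProduct]
      refine Finset.sum_congr rfl fun a _ => ?_
      have hmv : (B *ᵥ y) a = ∑ b : S, A (↑a) ↑b * x ↑b := by
        rw [Matrix.mulVec, dotProduct]
        exact Finset.sum_congr rfl fun b _ => by rw [hBA a b]
      rw [hmv]
    have h1 : ∀ a : S, ∑ b : S, A (↑a) ↑b * x ↑b = ∑ b ∈ C, A ↑a b * x b :=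
      fun a => hsub (fun b => A ↑a b * x b)
    rw [h0, Finset.sum_congr rfl (fun a _ => by rw [h1 a]),
      hsub (fun a => x a * ∑ b ∈ C, A a b * x b)]
    have hcol : ∑ a, x a * (A a i * x i) = ρ * x i ^ 2 := by
      have h2 : ∑ a, x a * (A a i * x i) = x i * ∑ a, A i a * x a := by
        rw [Finset.mul_sum]
        exact Finset.sum_congr rfl fun a _ => by rw [hAsymm i a]; ring
      rw [h2, hAx i]; ring
    have hstep : ∀ a, x a * ∑ b ∈ C, A a b * x b = ρ * x a ^ 2 - x a * (A a i * x i) := by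
      intro a
      rw [hC (fun b => A a b * x b), hAx a]; ring
    rw [Finset.sum_congr rfl (fun a _ => hstep a), hC (fun a => ρ * x a ^ 2 - x a * (A a i * x i)),
      Finset.sum_sub_distrib, ← Finset.mul_sum, hx_norm, hcol, hAii]
    ring
  -- key inequality
  have hkey : ρ - 2 * ρ * x i ^ 2 ≤ L * (1 - x i ^ 2) := by
    rw [← hBy, ← hyy]; exact rayleigh_le_specRad hB y
  have hL0 : 0 ≤ L := specRad_nonneg B
  have hxi := hx_pos i
  have hmain : ρ - L ≤ 2 * ρ * x i ^ 2 := by nlinarith [sq_nonneg (x i)]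
  -- sign of ρ
  have hρ0 : 0 ≤ ρ := by
    have h3 : 0 ≤ ∑ b, A i b * x b := by
      apply Finset.sum_nonneg
      intro b _
      have : (0:ℝ) ≤ A i b := by simp [hA_def, SimpleGraph.adjMatrix_apply]; positivity
      exact mul_nonneg this (hx_pos b).le
    rw [hAx i] at h3
    nlinarith
  rcases eq_or_lt_of_le hρ0 with hρz | hρp
  · rw [← hρz]
    simp [Real.sqrt_zero]
    exact hxi.le
  · have hdiv : (ρ - L) / (2 * ρ) ≤ x i ^ 2 := by
      rw [div_le_iff₀ (by positivity)]
      nlinarith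
    calc Real.sqrt ((ρ - L) / (2 * ρ)) ≤ Real.sqrt (x i ^ 2) := Real.sqrt_le_sqrt hdiv
      _ = x i := Real.sqrt_sq hxi.le
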